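/- Let f : 𝕋 → GLₙ(ℂ) be a continuous map taking values in Hermitian invertible matrices and admitting a canonical factorization f = f₋ f₊. Then the canonical extension fᵉ(z) = f₋ᵉ(z̄⁻¹) f₊ᵉ(z) to the closed unit disk also takes values in Hermitian invertible matrices. -/

import Mathlib

open Metric

local notation "conj'" => starRingEnd ℂ

section AuxAnalysis

lemma aux_tendsto_conj_ne (w : ℂ) :
    Filter.Tendsto (conj') (nhdsWithin w {w}ᶜ) (nhdsWithin (conj' w) {conj' w}ᶜ) := by
  rw [nhdsWithin, nhdsWithin]
  refine Filter.Tendsto.inf ((Complex.continuous_conj.tendsto w)) ?_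
  rw [Filter.tendsto_principal_principal]
  intro z hz
  simp only [Set.mem_compl_iff, Set.mem_singleton_iff] at *
  exact fun h => hz ((starRingEnd ℂ).injective h)

lemma aux_diffOn_conj_conj {G : ℂ → ℂ} (h : DifferentiableOn ℂ G (ball (0:ℂ) 1)) :
    DifferentiableOn ℂ (fun z => conj' (G (conj' z))) (ball (0:ℂ) 1) := by
  intro w hw
  have hw' : conj' w ∈ ball (0:ℂ) 1 := by
    simpa [mem_ball, Complex.dist_eq] using hw
  have hG : DifferentiableAt ℂ G (conj' w) := h.differentiableAt (isOpen_ball.mem_nhds hw')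
  obtain ⟨d, hd⟩ : ∃ d, HasDerivAt G d (conj' w) := ⟨_, hG.hasDerivAt⟩
  suffices hh : HasDerivAt (fun z => conj' (G (conj' z))) (conj' d) w from
    hh.differentiableAt.differentiableWithinAt
  rw [hasDerivAt_iff_tendsto_slope] at hd ⊢
  have h2 : Filter.Tendsto (fun z => conj' (slope G (conj' w) (conj' z)))
      (nhdsWithin w {w}ᶜ) (nhds (conj' d)) :=
    (Complex.continuous_conj.tendsto d).comp (hd.comp (aux_tendsto_conj_ne w))
  refine h2.congr fun z => ?_
  simp only [slope, vsub_eq_sub, map_mul, map_sub, map_inv₀, smul_eq_mul, Complex.conj_conj]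

lemma aux_intervalIntegral_conj {f : ℝ → ℂ} {a b : ℝ} :
    (∫ x in a..b, conj' (f x)) = conj' (∫ x in a..b, f x) := by
  simp only [intervalIntegral, ← integral_conj, map_sub]

lemma aux_circleIntegral_conj_zero {χ : ℂ → ℂ} (k : ℕ)
    (hc : ContinuousOn χ (closedBall 0 1)) (hd : DifferentiableOn ℂ χ (ball 0 1)) :
    (∮ z in C((0:ℂ), 1), (z - 0)⁻¹ ^ (k + 1) • (z - 0)⁻¹ • conj' (χ z)) = 0 := by
  have hzero : (∮ z in C((0:ℂ), 1), z ^ k • χ z) = 0 := by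
    refine Complex.circleIntegral_eq_zero_of_differentiable_on_off_countable zero_le_one
      Set.countable_empty (((continuous_pow k).continuousOn).smul hc) fun z hz => ?_
    exact (differentiableAt_pow k).smul (hd.differentiableAt (isOpen_ball.mem_nhds hz.1))
  have key : (∮ z in C((0:ℂ), 1), (z - 0)⁻¹ ^ (k + 1) • (z - 0)⁻¹ • conj' (χ z))
      = -conj' (∮ z in C((0:ℂ), 1), z ^ k • χ z) := by
    rw [circleIntegral, circleIntegral, ← aux_intervalIntegral_conj, ← intervalIntegral.integral_neg]
    refine intervalIntegral.integral_congr fun θ _ => ?_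
    have hne : circleMap 0 1 θ ≠ 0 := circleMap_ne_center one_ne_zero
    have hconj : conj' (circleMap 0 1 θ) = (circleMap 0 1 θ)⁻¹ := by
      simp only [circleMap, Complex.ofReal_one, one_mul, zero_add]
      rw [← Complex.exp_conj, ← Complex.exp_neg]
      congr 1
      simp [Complex.ext_iff]
    simp only [deriv_circleMap, smul_eq_mul, map_mul, map_pow, Complex.conj_I, hconj, sub_zero]
    field_simp
    rw [one_div, pow_succ, mul_comm (_ ^ k), ← mul_assoc, mul_inv_cancel₀ hne, one_mul, mul_comm]
  rw [key, hzero, map_zero, neg_zero]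

lemma aux_const_of_conj_boundary {g χ : ℂ → ℂ}
    (hgc : ContinuousOn g (closedBall 0 1)) (hgd : DifferentiableOn ℂ g (ball 0 1))
    (hχc : ContinuousOn χ (closedBall 0 1)) (hχd : DifferentiableOn ℂ χ (ball 0 1))
    (hb : ∀ z ∈ sphere (0:ℂ) 1, g z = conj' (χ z)) :
    ∀ z ∈ closedBall (0:ℂ) 1, g z = g 0 := by
  have h1 : ((1 : NNReal) : ℝ) = (1 : ℝ) := rfl
  have hps : HasFPowerSeriesOnBall g (cauchyPowerSeries g 0 1) 0 1 := by
    have := Complex.hasFPowerSeriesOnBall_of_differentiable_off_countable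
      (R := 1) (c := 0) (f := g) (s := ∅) Set.countable_empty
      (by simpa [h1] using hgc)
      (fun z hz => hgd.differentiableAt (isOpen_ball.mem_nhds (by simpa [h1] using hz.1)))
      one_pos
    simpa using this
  have hcoef : ∀ k : ℕ,
      (∮ z in C((0:ℂ), 1), (z - 0)⁻¹ ^ (k + 1) • (z - 0)⁻¹ • g z) = 0 := by
    intro k
    rw [circleIntegral.integral_congr zero_le_one
      (g := fun z => (z - 0)⁻¹ ^ (k + 1) • (z - 0)⁻¹ • conj' (χ z))
      (fun z hz => by rw [hb z hz])]
    exact aux_circleIntegral_conj_zero k hχc hχd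
  have hball : ∀ y ∈ ball (0:ℂ) 1, g y = g 0 := by
    have key : ∀ y ∈ ball (0:ℂ) 1, g y = cauchyPowerSeries g 0 1 0 (fun _ => (0:ℂ)) := by
      intro y hy
      have hy' : y ∈ Metric.eball (0:ℂ) 1 := by
        rw [EMetric.mem_ball, edist_zero_right, ← ENNReal.coe_one]
        rw [mem_ball, Complex.dist_eq, sub_zero] at hy
        exact_mod_cast (by simpa [← coe_nnnorm] using hy : ‖y‖₊ < 1)
      have hsum := hps.hasSum (y := y) (by simpa using hy')
      have hterm : ∀ m : ℕ, m ≠ 0 → (cauchyPowerSeries g 0 1 m fun _ => y) = 0 := by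
        intro m hm
        obtain ⟨k, rfl⟩ := Nat.exists_eq_succ_of_ne_zero hm
        rw [cauchyPowerSeries_apply]
        have : (∮ z in C((0:ℂ), 1), (y / (z - 0)) ^ (k+1) • (z - 0)⁻¹ • g z)
            = y ^ (k+1) • (∮ z in C((0:ℂ), 1), (z - 0)⁻¹ ^ (k + 1) • (z - 0)⁻¹ • g z) := by
          rw [← circleIntegral.integral_smul]
          refine circleIntegral.integral_congr zero_le_one fun z hz => ?_
          simp only [div_pow, div_eq_mul_inv, smul_eq_mul, inv_pow]
          ring
        rw [this, hcoef k, smul_zero, smul_zero]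
      have h0 : (cauchyPowerSeries g 0 1 0 fun _ => y)
          = cauchyPowerSeries g 0 1 0 (fun _ => (0:ℂ)) := by
        congr 1; funext i; exact absurd i.2 (by omega)
      have hsum2 : HasSum (fun m => cauchyPowerSeries g 0 1 m fun _ => y)
          (cauchyPowerSeries g 0 1 0 (fun _ => (0:ℂ))) := by
        rw [← h0]
        exact hasSum_single 0 (fun m hm => hterm m hm)
      have := hsum.unique hsum2
      simpa using this
    intro y hy
    rw [key y hy, ← key 0 (by simp)]
  have heq : Set.EqOn g (fun _ => g 0) (closedBall (0:ℂ) 1) := by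
    have hclosure : closure (ball (0:ℂ) 1) = closedBall (0:ℂ) 1 :=
      closure_ball 0 one_ne_zero
    exact Set.EqOn.of_subset_closure (fun y hy => hball y hy) hgc continuousOn_const
      ball_subset_closedBall (by rw [hclosure])
  exact fun z hz => heq hz

end AuxAnalysis

section AuxMatrix

variable {N : ℕ} {s : Set ℂ}

lemma aux_diffOn_det {A : ℂ → Matrix (Fin N) (Fin N) ℂ}
    (h : ∀ i j, DifferentiableOn ℂ (fun z => A z i j) s) :
    DifferentiableOn ℂ (fun z => (A z).det) s := by
  simp_rw [Matrix.det_apply']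
  exact DifferentiableOn.fun_sum fun σ _ =>
    (DifferentiableOn.fun_finset_prod (u := Finset.univ) (fun i _ => h (σ i) i)).const_mul _

lemma aux_diffOn_adj {A : ℂ → Matrix (Fin N) (Fin N) ℂ}
    (h : ∀ i j, DifferentiableOn ℂ (fun z => A z i j) s) (i j : Fin N) :
    DifferentiableOn ℂ (fun z => (A z).adjugate i j) s := by
  simp_rw [Matrix.adjugate_apply]
  refine aux_diffOn_det fun a b => ?_
  by_cases hab : a = j
  · simp only [Matrix.updateRow_apply, hab, if_true]
    exact differentiableOn_const _
  · simp only [Matrix.updateRow_apply, hab, if_false]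
    exact h a b

lemma aux_diffOn_inv {A : ℂ → Matrix (Fin N) (Fin N) ℂ}
    (h : ∀ i j, DifferentiableOn ℂ (fun z => A z i j) s)
    (hu : ∀ z ∈ s, IsUnit (A z)) (i j : Fin N) :
    DifferentiableOn ℂ (fun z => (A z)⁻¹ i j) s := by
  have hrw : ∀ z, (A z)⁻¹ i j = ((A z).det)⁻¹ * (A z).adjugate i j := by
    intro z
    rw [Matrix.inv_def, Ring.inverse_eq_inv']
    simp [Matrix.smul_apply, smul_eq_mul]
  simp_rw [hrw]
  refine DifferentiableOn.mul (DifferentiableOn.inv (aux_diffOn_det h) ?_) (aux_diffOn_adj h i j)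
  intro z hz
  exact ((Matrix.isUnit_iff_isUnit_det _).mp (hu z hz)).ne_zero

lemma aux_contOn_entry {A : ℂ → Matrix (Fin N) (Fin N) ℂ}
    (h : ContinuousOn A s) (i j : Fin N) : ContinuousOn (fun z => A z i j) s := by
  have hc : Continuous (fun m : Matrix (Fin N) (Fin N) ℂ => m i j) := by fun_prop
  exact fun z hz => (hc.continuousAt).comp_continuousWithinAt (h z hz)

lemma aux_contOn_inv {A : ℂ → Matrix (Fin N) (Fin N) ℂ}
    (h : ContinuousOn A s) (hu : ∀ z ∈ s, IsUnit (A z)) (i j : Fin N) :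
    ContinuousOn (fun z => (A z)⁻¹ i j) s := by
  have hrw : ∀ z, (A z)⁻¹ i j = ((A z).det)⁻¹ * (A z).adjugate i j := by
    intro z
    rw [Matrix.inv_def, Ring.inverse_eq_inv']
    simp [Matrix.smul_apply, smul_eq_mul]
  simp_rw [hrw]
  have hdet : ContinuousOn (fun z => (A z).det) s :=
    (continuous_id.matrix_det).comp_continuousOn h
  have hadj : ContinuousOn (fun z => (A z).adjugate i j) s :=
    aux_contOn_entry ((continuous_id.matrix_adjugate).comp_continuousOn h) i j
  exact (hdet.inv₀ fun z hz =>
    ((Matrix.isUnit_iff_isUnit_det _).mp (hu z hz)).ne_zero).mul hadj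

end AuxMatrix

/-- A canonical (right) factorization `f = f₋ f₊` of a nonsingular matrix function on the
unit circle.  The factor `f₊` extends continuously and invertibly to the closed unit disk,
analytically on the open disk; the factor `f₋` extends continuously and invertibly to the
closed exterior disk including `∞`.  We encode the exterior extension `f₋ᵉ` via the map
`Fm : 𝔻² → GLₙ(ℂ)`, `Fm w = f₋ᵉ(w⁻¹)` (so `Fm 0 = f₋ᵉ(∞)`), which is continuous on the
closed unit disk, analytic on the open disk, and invertible-valued. -/
structure CanonicalFactorization (n : ℕ) (f : ℂ → Matrix (Fin n) (Fin n) ℂ) : Type where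
  Fm : ℂ → Matrix (Fin n) (Fin n) ℂ
  Fp : ℂ → Matrix (Fin n) (Fin n) ℂ
  contOn_m : ContinuousOn Fm (closedBall 0 1)
  contOn_p : ContinuousOn Fp (closedBall 0 1)
  anal_m : ∀ i j, DifferentiableOn ℂ (fun z => Fm z i j) (ball 0 1)
  anal_p : ∀ i j, DifferentiableOn ℂ (fun z => Fp z i j) (ball 0 1)
  unit_m : ∀ z ∈ closedBall (0 : ℂ) 1, IsUnit (Fm z)
  unit_p : ∀ z ∈ closedBall (0 : ℂ) 1, IsUnit (Fp z)
  factor : ∀ z ∈ sphere (0 : ℂ) 1, f z = Fm z⁻¹ * Fp z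


open Matrix in
/-- If `f : 𝕋 → GLₙ(ℂ)` takes values in Hermitian invertible matrices and admits a canonical
factorization `f = f₋ f₊`, then the canonical extension `fᵉ(z) = f₋ᵉ(z̄⁻¹) f₊ᵉ(z)` to the
closed unit disk also takes values in Hermitian invertible matrices. -/
theorem extension_hermitian {n : ℕ} (f : ℂ → Matrix (Fin n) (Fin n) ℂ)
    (c : CanonicalFactorization n f)
    (hherm : ∀ z ∈ sphere (0 : ℂ) 1, (f z)ᴴ = f z) :
    ∀ z ∈ closedBall (0 : ℂ) 1,
      (c.Fm (starRingEnd ℂ z) * c.Fp z)ᴴ = c.Fm (starRingEnd ℂ z) * c.Fp z ∧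
      IsUnit (c.Fm (starRingEnd ℂ z) * c.Fp z) := by
  have hmapscb : Set.MapsTo (conj') (closedBall (0:ℂ) 1) (closedBall (0:ℂ) 1) := by
    intro z hz
    simpa [mem_closedBall, Complex.dist_eq] using hz
  have hmapssp : ∀ z ∈ sphere (0:ℂ) 1, conj' z ∈ sphere (0:ℂ) 1 := by
    intro z hz
    simpa [mem_sphere, Complex.dist_eq] using hz
  -- the boundary identity
  have hsphere : ∀ w ∈ sphere (0:ℂ) 1,
      (c.Fm w)⁻¹ * (c.Fp (conj' w))ᴴ = c.Fp (conj' w) * ((c.Fm w)⁻¹)ᴴ := by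
    intro w hw
    have hw' : conj' w ∈ sphere (0:ℂ) 1 := hmapssp w hw
    have hfac := c.factor (conj' w) hw'
    have hinv : (conj' w)⁻¹ = w := by
      have hn : Complex.normSq w = 1 := by
        have : ‖w‖ = 1 := by simpa [mem_sphere, Complex.dist_eq] using hw
        rw [Complex.normSq_eq_norm_sq, this, one_pow]
      have h1 : w * conj' w = 1 := by
        rw [Complex.mul_conj, hn, Complex.ofReal_one]
      exact (eq_inv_of_mul_eq_one_left h1).symm
    rw [hinv] at hfac
    have hherm' := hherm (conj' w) hw'
    rw [hfac] at hherm'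
    have hA : IsUnit ((c.Fm w).det) :=
      (Matrix.isUnit_iff_isUnit_det _).mp (c.unit_m w (sphere_subset_closedBall hw))
    have hAH : IsUnit ((c.Fm w)ᴴ.det) := by
      rw [Matrix.det_conjTranspose]
      exact hA.star
    have hE : (c.Fp (conj' w))ᴴ * (c.Fm w)ᴴ = c.Fm w * c.Fp (conj' w) := by
      rw [← Matrix.conjTranspose_mul]
      exact hherm'
    calc (c.Fm w)⁻¹ * (c.Fp (conj' w))ᴴ
        = (c.Fm w)⁻¹ * ((c.Fp (conj' w))ᴴ * (c.Fm w)ᴴ * ((c.Fm w)ᴴ)⁻¹) := by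
          rw [Matrix.mul_nonsing_inv_cancel_right _ _ hAH]
      _ = (c.Fm w)⁻¹ * (c.Fm w * c.Fp (conj' w) * ((c.Fm w)ᴴ)⁻¹) := by rw [hE]
      _ = c.Fp (conj' w) * ((c.Fm w)ᴴ)⁻¹ := by
          rw [Matrix.mul_assoc, Matrix.nonsing_inv_mul_cancel_left _ _ hA]
      _ = c.Fp (conj' w) * ((c.Fm w)⁻¹)ᴴ := by rw [Matrix.conjTranspose_nonsing_inv]
  -- constancy of φ(w) = (Fm w)⁻¹ * (Fp (conj w))ᴴ on the closed disk
  have hdM : ∀ i j, DifferentiableOn ℂ (fun w => (c.Fm w)⁻¹ i j) (ball 0 1) :=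
    aux_diffOn_inv c.anal_m (fun z hz => c.unit_m z (ball_subset_closedBall hz))
  have hcM : ∀ i j, ContinuousOn (fun w => (c.Fm w)⁻¹ i j) (closedBall 0 1) :=
    aux_contOn_inv c.contOn_m c.unit_m
  have hdP : ∀ i j, DifferentiableOn ℂ (fun w => conj' (c.Fp (conj' w) i j)) (ball 0 1) :=
    fun i j => aux_diffOn_conj_conj (c.anal_p i j)
  have hcP : ∀ i j, ContinuousOn (fun w => conj' (c.Fp (conj' w) i j)) (closedBall 0 1) := by
    intro i j
    exact Complex.continuous_conj.comp_continuousOn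
      (((aux_contOn_entry c.contOn_p i j)).comp Complex.continuous_conj.continuousOn hmapscb)
  have key : ∀ (i j : Fin n), ∀ w ∈ closedBall (0:ℂ) 1,
      ((c.Fm w)⁻¹ * (c.Fp (conj' w))ᴴ) i j = ((c.Fm 0)⁻¹ * (c.Fp (conj' 0))ᴴ) i j := by
    intro i j
    have hgd : DifferentiableOn ℂ
        (fun w => ∑ k, (c.Fm w)⁻¹ i k * conj' (c.Fp (conj' w) j k)) (ball 0 1) :=
      DifferentiableOn.fun_sum fun k _ => (hdM i k).mul (hdP j k)
    have hgc : ContinuousOn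
        (fun w => ∑ k, (c.Fm w)⁻¹ i k * conj' (c.Fp (conj' w) j k)) (closedBall 0 1) :=
      continuousOn_finset_sum _ fun k _ => (hcM i k).mul (hcP j k)
    have hχd : DifferentiableOn ℂ
        (fun w => ∑ k, conj' (c.Fp (conj' w) i k) * (c.Fm w)⁻¹ j k) (ball 0 1) :=
      DifferentiableOn.fun_sum fun k _ => (hdP i k).mul (hdM j k)
    have hχc : ContinuousOn
        (fun w => ∑ k, conj' (c.Fp (conj' w) i k) * (c.Fm w)⁻¹ j k) (closedBall 0 1) :=
      continuousOn_finset_sum _ fun k _ => (hcP i k).mul (hcM j k)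
    have hbd : ∀ z ∈ sphere (0:ℂ) 1,
        (∑ k, (c.Fm z)⁻¹ i k * conj' (c.Fp (conj' z) j k))
          = conj' (∑ k, conj' (c.Fp (conj' z) i k) * (c.Fm z)⁻¹ j k) := by
      intro z hz
      have h1 : (∑ k, (c.Fm z)⁻¹ i k * conj' (c.Fp (conj' z) j k))
          = ((c.Fm z)⁻¹ * (c.Fp (conj' z))ᴴ) i j := by
        simp [Matrix.mul_apply, Matrix.conjTranspose_apply]
      have h2 : conj' (∑ k, conj' (c.Fp (conj' z) i k) * (c.Fm z)⁻¹ j k)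
          = (c.Fp (conj' z) * ((c.Fm z)⁻¹)ᴴ) i j := by
        rw [map_sum]
        simp [Matrix.mul_apply, Matrix.conjTranspose_apply]
      rw [h1, h2, hsphere z hz]
    have hconst := aux_const_of_conj_boundary hgc hgd hχc hχd hbd
    intro w hw
    have e1 : ((c.Fm w)⁻¹ * (c.Fp (conj' w))ᴴ) i j
        = ∑ k, (c.Fm w)⁻¹ i k * conj' (c.Fp (conj' w) j k) := by
      simp [Matrix.mul_apply, Matrix.conjTranspose_apply]
    have e0 : ((c.Fm 0)⁻¹ * (c.Fp (conj' 0))ᴴ) i j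
        = ∑ k, (c.Fm 0)⁻¹ i k * conj' (c.Fp (conj' 0) j k) := by
      simp [Matrix.mul_apply, Matrix.conjTranspose_apply]
    rw [e1, e0, hconst w hw]
  have hconst : ∀ w ∈ closedBall (0:ℂ) 1,
      (c.Fm w)⁻¹ * (c.Fp (conj' w))ᴴ = (c.Fm 1)⁻¹ * (c.Fp (conj' 1))ᴴ := by
    have h1cb : (1:ℂ) ∈ closedBall (0:ℂ) 1 := by
      simp [mem_closedBall, Complex.dist_eq]
    intro w hw
    ext i j
    rw [key i j w hw, ← key i j 1 h1cb]
  set B := (c.Fm 1)⁻¹ * (c.Fp (conj' 1))ᴴ with hBdef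
  have h1s : (1:ℂ) ∈ sphere (0:ℂ) 1 := by simp [mem_sphere, Complex.dist_eq]
  have hBH : Bᴴ = B := by
    have heq1 := hsphere 1 h1s
    have : Bᴴ = c.Fp (conj' 1) * ((c.Fm 1)⁻¹)ᴴ := by
      rw [hBdef, Matrix.conjTranspose_mul, Matrix.conjTranspose_conjTranspose]
    rw [this, ← heq1]
  intro z hz
  have hz' : conj' z ∈ closedBall (0:ℂ) 1 := hmapscb hz
  have hφ := hconst (conj' z) hz'
  rw [Complex.conj_conj] at hφ
  have hu : IsUnit ((c.Fm (conj' z)).det) :=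
    (Matrix.isUnit_iff_isUnit_det _).mp (c.unit_m _ hz')
  have hPH : (c.Fp z)ᴴ = c.Fm (conj' z) * B := by
    calc (c.Fp z)ᴴ = c.Fm (conj' z) * ((c.Fm (conj' z))⁻¹ * (c.Fp z)ᴴ) :=
          (Matrix.mul_nonsing_inv_cancel_left _ _ hu).symm
      _ = c.Fm (conj' z) * B := by rw [hφ]
  have hP : c.Fp z = B * (c.Fm (conj' z))ᴴ := by
    have h := congrArg Matrix.conjTranspose hPH
    simpa [Matrix.conjTranspose_mul, hBH] using h
  constructor
  · calc (c.Fm (conj' z) * c.Fp z)ᴴ = (c.Fp z)ᴴ * (c.Fm (conj' z))ᴴ :=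
        Matrix.conjTranspose_mul _ _
      _ = c.Fm (conj' z) * B * (c.Fm (conj' z))ᴴ := by rw [hPH]
      _ = c.Fm (conj' z) * (B * (c.Fm (conj' z))ᴴ) := Matrix.mul_assoc _ _ _
      _ = c.Fm (conj' z) * c.Fp z := by rw [← hP]
  · exact (c.unit_m _ hz').mul (c.unit_p z hz)
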